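/- Let A₁,…,A_m ∈ ℝ^{d₁×d₂}, b ∈ ℝ^m, 𝒜(X) := (⟨A₁, X⟩, …, ⟨A_m, X⟩), and f(L, R) := ‖𝒜(LRᵀ) − b‖₂² on ℝ^{d₁×k} × ℝ^{d₂×k}, with ‖(L,R)‖ := √(‖L‖_F² + ‖R‖_F²). Then for every B > 0 and all points (L₁,R₁), (L₂,R₂) with ‖(L₁,R₁)‖ ≤ B and ‖(L₂,R₂)‖ ≤ B, and every direction (U, V), |D²f(L₁,R₁)[(U,V),(U,V)] − D²f(L₂,R₂)[(U,V),(U,V)]| ≤ 12·B·(Σᵢ ‖Aᵢ‖_F²)·(‖U‖_F² + ‖V‖_F²)·‖(L₁,R₁) − (L₂,R₂)‖; equivalently, the operator norm of the difference of Hessians of f at these two points is at most 12·B·(Σᵢ ‖Aᵢ‖_F²)·‖(L₁,R₁) − (L₂,R₂)‖. -/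

import Mathlib

open Matrix
open scoped RealInnerProductSpace

noncomputable section

attribute [local instance] Matrix.frobeniusNormedAddCommGroup Matrix.frobeniusNormedSpace

/-- The linear measurement map `𝒜(X) = (⟨A₁,X⟩, …, ⟨A_m,X⟩)`, where `⟨A,X⟩ = tr(AᵀX)`. -/
def calA {m d₁ d₂ : ℕ} (A : Fin m → Matrix (Fin d₁) (Fin d₂) ℝ)
    (X : Matrix (Fin d₁) (Fin d₂) ℝ) : EuclideanSpace ℝ (Fin m) :=
  (WithLp.equiv 2 (Fin m → ℝ)).symm fun i => Matrix.trace ((A i)ᵀ * X)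

/-- The matrix-factorization objective `f(L,R) = ‖𝒜(LRᵀ) − b‖₂²`. -/
def mfObj {m d₁ d₂ k : ℕ} (A : Fin m → Matrix (Fin d₁) (Fin d₂) ℝ)
    (b : EuclideanSpace ℝ (Fin m))
    (p : Matrix (Fin d₁) (Fin k) ℝ × Matrix (Fin d₂) (Fin k) ℝ) : ℝ :=
  ‖calA A (p.1 * p.2ᵀ) - b‖ ^ 2

/-- Squared Frobenius norm. -/
def frobSq {d₁ d₂ : ℕ} (X : Matrix (Fin d₁) (Fin d₂) ℝ) : ℝ := ∑ i, ∑ j, X i j ^ 2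

variable {m d₁ d₂ k : ℕ}

def aL (A : Fin m → Matrix (Fin d₁) (Fin d₂) ℝ) :
    Matrix (Fin d₁) (Fin d₂) ℝ →L[ℝ] EuclideanSpace ℝ (Fin m) :=
  LinearMap.toContinuousLinearMap
    { toFun := calA A
      map_add' := fun X Y => by
        ext i
        simp [calA, Matrix.mul_add, WithLp.equiv_symm_apply]
      map_smul' := fun c X => by
        ext i
        simp [calA, Matrix.mul_smul, WithLp.equiv_symm_apply] }

@[simp] lemma aL_apply (A : Fin m → Matrix (Fin d₁) (Fin d₂) ℝ) (X) :
    aL A X = calA A X := rfl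

def psiLin (A : Fin m → Matrix (Fin d₁) (Fin d₂) ℝ) :
    (Matrix (Fin d₁) (Fin k) ℝ × Matrix (Fin d₂) (Fin k) ℝ) →ₗ[ℝ]
      (Matrix (Fin d₁) (Fin k) ℝ × Matrix (Fin d₂) (Fin k) ℝ) →ₗ[ℝ]
        EuclideanSpace ℝ (Fin m) :=
  LinearMap.mk₂ ℝ (fun x w => aL A (x.1 * w.2ᵀ + w.1 * x.2ᵀ))
    (fun x y w => by
      rw [← map_add]
      congr 1
      simp only [Prod.fst_add, Prod.snd_add, Matrix.add_mul, Matrix.mul_add,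
        Matrix.transpose_add]
      abel)
    (fun c x w => by
      rw [← (aL A).map_smul]
      congr 1
      simp only [Prod.smul_fst, Prod.smul_snd, Matrix.smul_mul, Matrix.mul_smul,
        Matrix.transpose_smul, smul_add])
    (fun x w₁ w₂ => by
      rw [← map_add]
      congr 1
      simp only [Prod.fst_add, Prod.snd_add, Matrix.add_mul, Matrix.mul_add,
        Matrix.transpose_add]
      abel)
    (fun c x w => by
      rw [← (aL A).map_smul]
      congr 1
      simp only [Prod.smul_fst, Prod.smul_snd, Matrix.smul_mul, Matrix.mul_smul,
        Matrix.transpose_smul, smul_add])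

def psiL (A : Fin m → Matrix (Fin d₁) (Fin d₂) ℝ) :
    (Matrix (Fin d₁) (Fin k) ℝ × Matrix (Fin d₂) (Fin k) ℝ) →L[ℝ]
      (Matrix (Fin d₁) (Fin k) ℝ × Matrix (Fin d₂) (Fin k) ℝ) →L[ℝ]
        EuclideanSpace ℝ (Fin m) :=
  LinearMap.toContinuousLinearMap
    ((LinearMap.toContinuousLinearMap :
        (_ →ₗ[ℝ] EuclideanSpace ℝ (Fin m)) ≃ₗ[ℝ] _).toLinearMap.comp (psiLin A))

@[simp] lemma psiL_apply (A : Fin m → Matrix (Fin d₁) (Fin d₂) ℝ)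
    (x w : Matrix (Fin d₁) (Fin k) ℝ × Matrix (Fin d₂) (Fin k) ℝ) :
    psiL A x w = calA A (x.1 * w.2ᵀ + w.1 * x.2ᵀ) := rfl

lemma mulIsBdd :
    IsBoundedBilinearMap ℝ (fun x : (Matrix (Fin d₁) (Fin k) ℝ) × (Matrix (Fin d₂) (Fin k) ℝ)
      => x.1 * x.2ᵀ) where
  add_left x₁ x₂ y := Matrix.add_mul _ _ _
  smul_left c x y := Matrix.smul_mul _ _ _
  add_right x y₁ y₂ := by rw [Matrix.transpose_add, Matrix.mul_add]
  smul_right c x y := by rw [Matrix.transpose_smul, Matrix.mul_smul]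
  bound := ⟨1, one_pos, fun x y => by
    calc ‖x * yᵀ‖ ≤ ‖x‖ * ‖yᵀ‖ := Matrix.frobenius_norm_mul x yᵀ
    _ = 1 * ‖x‖ * ‖y‖ := by rw [Matrix.frobenius_norm_transpose, one_mul]⟩

variable (A : Fin m → Matrix (Fin d₁) (Fin d₂) ℝ) (b : EuclideanSpace ℝ (Fin m))

lemma hasFDerivAt_g (x : Matrix (Fin d₁) (Fin k) ℝ × Matrix (Fin d₂) (Fin k) ℝ) :
    HasFDerivAt (fun p : Matrix (Fin d₁) (Fin k) ℝ × Matrix (Fin d₂) (Fin k) ℝ =>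
      calA A (p.1 * p.2ᵀ) - b) (psiL A x) x := by
  have h1 := (mulIsBdd (d₁ := d₁) (d₂ := d₂) (k := k)).hasFDerivAt x
  have h2 := ((aL A).hasFDerivAt.comp x h1).sub_const b
  have : psiL (k := k) A x = (aL A).comp (mulIsBdd.deriv x) := by
    refine ContinuousLinearMap.ext fun w => ?_
    simp only [psiL_apply, ContinuousLinearMap.comp_apply,
      IsBoundedBilinearMap.deriv_apply, aL_apply]
    rfl
  rw [this]
  exact h2
def gfun (x : Matrix (Fin d₁) (Fin k) ℝ × Matrix (Fin d₂) (Fin k) ℝ) :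
    EuclideanSpace ℝ (Fin m) := calA A (x.1 * x.2ᵀ) - b

def inR : EuclideanSpace ℝ (Fin m) →L[ℝ] EuclideanSpace ℝ (Fin m) →L[ℝ] ℝ :=
  LinearMap.toContinuousLinearMap
    ((LinearMap.toContinuousLinearMap :
        (_ →ₗ[ℝ] ℝ) ≃ₗ[ℝ] _).toLinearMap.comp
      (LinearMap.mk₂ ℝ (fun a b : EuclideanSpace ℝ (Fin m) => (⟪a, b⟫ : ℝ))
        (fun a a' c => inner_add_left a a' c)
        (fun r a c => real_inner_smul_left a c r)
        (fun a c c' => inner_add_right a c c')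
        (fun r a c => real_inner_smul_right a c r)))

@[simp] lemma inR_apply (a c : EuclideanSpace ℝ (Fin m)) : inR a c = ⟪a, c⟫ := rfl

def D1 (x : Matrix (Fin d₁) (Fin k) ℝ × Matrix (Fin d₂) (Fin k) ℝ) :
    (Matrix (Fin d₁) (Fin k) ℝ × Matrix (Fin d₂) (Fin k) ℝ) →L[ℝ] ℝ :=
  (2 : ℝ) • ((inR (gfun A b x)).comp (psiL A x))

lemma hasFDerivAt_f (x : Matrix (Fin d₁) (Fin k) ℝ × Matrix (Fin d₂) (Fin k) ℝ) :
    HasFDerivAt (mfObj A b) (D1 A b x) x := by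
  have hg := hasFDerivAt_g A b x
  have h : HasFDerivAt (fun p : Matrix (Fin d₁) (Fin k) ℝ × Matrix (Fin d₂) (Fin k) ℝ =>
      ⟪calA A (p.1 * p.2ᵀ) - b, calA A (p.1 * p.2ᵀ) - b⟫)
      ((fderivInnerCLM ℝ (gfun A b x, gfun A b x)).comp ((psiL A x).prod (psiL A x))) x :=
    hg.inner ℝ hg
  have heq : mfObj A b = fun p : Matrix (Fin d₁) (Fin k) ℝ × Matrix (Fin d₂) (Fin k) ℝ =>
      ⟪calA A (p.1 * p.2ᵀ) - b, calA A (p.1 * p.2ᵀ) - b⟫ := by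
    funext p
    rw [real_inner_self_eq_norm_sq]
    rfl
  rw [heq]
  convert h using 1
  · rfl
  refine ContinuousLinearMap.ext fun w => ?_
  simp only [D1, ContinuousLinearMap.smul_apply, ContinuousLinearMap.comp_apply,
    inR_apply, ContinuousLinearMap.prod_apply, fderivInnerCLM_apply]
  rw [real_inner_comm (psiL A x w) (gfun A b x)]
  rw [smul_eq_mul]
  ring

lemma hasFDerivAt_D1 (x : Matrix (Fin d₁) (Fin k) ℝ × Matrix (Fin d₂) (Fin k) ℝ) :
    HasFDerivAt (D1 A b)
      ((2 : ℝ) • ((ContinuousLinearMap.compL ℝ _ _ ℝ ((inR (m := m)) (gfun A b x))).comp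
          (psiL A) +
        ((ContinuousLinearMap.compL ℝ (Matrix (Fin d₁) (Fin k) ℝ × Matrix (Fin d₂) (Fin k) ℝ)
          (EuclideanSpace ℝ (Fin m)) ℝ).flip (psiL A x)).comp
          ((inR (m := m)).comp (psiL A x)))) x := by
  have hc : HasFDerivAt (fun y => inR (gfun A b y))
      ((inR (m := m)).comp (psiL A x)) x :=
    inR.hasFDerivAt.comp x (hasFDerivAt_g A b x)
  have hd : HasFDerivAt (fun y => psiL (k := k) A y) (psiL A) x := (psiL A).hasFDerivAt
  exact (hc.clm_comp hd).const_smul (2 : ℝ)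

lemma second_deriv_formula (x v : Matrix (Fin d₁) (Fin k) ℝ × Matrix (Fin d₂) (Fin k) ℝ) :
    iteratedFDeriv ℝ 2 (mfObj A b) x ![v, v] =
      2 * ‖calA A (x.1 * v.2ᵀ + v.1 * x.2ᵀ)‖ ^ 2 +
        4 * ⟪calA A (x.1 * x.2ᵀ) - b, calA A (v.1 * v.2ᵀ)⟫ := by
  rw [iteratedFDeriv_two_apply]
  have hfd : fderiv ℝ (mfObj (k := k) A b) = D1 A b :=
    funext fun y => (hasFDerivAt_f A b y).fderiv
  erw [hfd, (show fderiv ℝ (D1 A b) x = _ from HasFDerivAt.fderiv (hasFDerivAt_D1 A b x))]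
  have h1 : ((![v, v] : Fin 2 → _) 0) = v := rfl
  have h2 : ((![v, v] : Fin 2 → _) 1) = v := rfl
  rw [h1, h2]
  change 2 * (inR (gfun A b x) (psiL A v v) + inR (psiL A x v) (psiL A x v)) = _
  simp only [ContinuousLinearMap.smul_apply, ContinuousLinearMap.add_apply,
    ContinuousLinearMap.comp_apply, ContinuousLinearMap.compL_apply,
    ContinuousLinearMap.flip_apply, inR_apply, psiL_apply, smul_eq_mul]
  have hv : calA A (v.1 * v.2ᵀ + v.1 * v.2ᵀ) = calA A (v.1 * v.2ᵀ) + calA A (v.1 * v.2ᵀ) :=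
    map_add (aL A).toLinearMap _ _
  rw [hv, real_inner_self_eq_norm_sq (calA A (x.1 * v.2ᵀ + v.1 * x.2ᵀ)),
    inner_add_right]
  have hgf : gfun A b x = calA A (x.1 * x.2ᵀ) - b := rfl
  rw [hgf]
  ring

lemma frobSq_nonneg (X : Matrix (Fin d₁) (Fin d₂) ℝ) : 0 ≤ frobSq X :=
  Finset.sum_nonneg fun _ _ => Finset.sum_nonneg fun _ _ => sq_nonneg _

lemma frob_norm_sq (X : Matrix (Fin d₁) (Fin d₂) ℝ) : ‖X‖ ^ 2 = frobSq X := by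
  rw [Matrix.frobenius_norm_def, ← Real.sqrt_eq_rpow, Real.sq_sqrt]
  · simp [frobSq, Real.norm_eq_abs, sq_abs]
  · positivity

lemma frob_norm_eq (X : Matrix (Fin d₁) (Fin d₂) ℝ) : ‖X‖ = Real.sqrt (frobSq X) := by
  rw [← frob_norm_sq, Real.sqrt_sq (norm_nonneg X)]

/-- Cauchy–Schwarz for the trace pairing. -/
lemma trace_abs_le (Y X : Matrix (Fin d₁) (Fin d₂) ℝ) :
    |Matrix.trace (Yᵀ * X)| ≤ ‖Y‖ * ‖X‖ := by
  have htr : Matrix.trace (Yᵀ * X) = ∑ p : Fin d₁ × Fin d₂, Y p.1 p.2 * X p.1 p.2 := by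
    rw [Matrix.trace]
    simp only [Matrix.diag, Matrix.mul_apply, Matrix.transpose_apply]
    rw [Fintype.sum_prod_type]
    exact Finset.sum_comm
  have hcs := Finset.sum_mul_sq_le_sq_mul_sq Finset.univ
    (fun p : Fin d₁ × Fin d₂ => Y p.1 p.2) (fun p => X p.1 p.2)
  have hY : (∑ p : Fin d₁ × Fin d₂, Y p.1 p.2 ^ 2) = frobSq Y := by
    rw [frobSq, Fintype.sum_prod_type]
  have hX : (∑ p : Fin d₁ × Fin d₂, X p.1 p.2 ^ 2) = frobSq X := by
    rw [frobSq, Fintype.sum_prod_type]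
  rw [hY, hX] at hcs
  rw [htr]
  have h1 : |∑ p : Fin d₁ × Fin d₂, Y p.1 p.2 * X p.1 p.2| =
      Real.sqrt ((∑ p : Fin d₁ × Fin d₂, Y p.1 p.2 * X p.1 p.2) ^ 2) := by
    rw [Real.sqrt_sq_eq_abs]
  rw [h1, frob_norm_eq, frob_norm_eq, ← Real.sqrt_mul (frobSq_nonneg Y)]
  exact Real.sqrt_le_sqrt hcs

/-- Operator bound for `calA` with Frobenius norm. -/
lemma calA_norm_le (A : Fin m → Matrix (Fin d₁) (Fin d₂) ℝ) (X : Matrix (Fin d₁) (Fin d₂) ℝ) :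
    ‖calA A X‖ ≤ Real.sqrt (∑ i, frobSq (A i)) * ‖X‖ := by
  rw [EuclideanSpace.norm_eq]
  have hle : ∀ i : Fin m, ‖calA A X i‖ ^ 2 ≤ frobSq (A i) * ‖X‖ ^ 2 := by
    intro i
    have : calA A X i = Matrix.trace ((A i)ᵀ * X) := rfl
    rw [this, Real.norm_eq_abs, sq_abs]
    have h := trace_abs_le (A i) X
    have h2 : (Matrix.trace ((A i)ᵀ * X)) ^ 2 ≤ (‖A i‖ * ‖X‖) ^ 2 := by
      rw [← sq_abs]
      exact pow_le_pow_left₀ (abs_nonneg _) h 2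
    calc (Matrix.trace ((A i)ᵀ * X)) ^ 2 ≤ (‖A i‖ * ‖X‖) ^ 2 := h2
    _ = frobSq (A i) * ‖X‖ ^ 2 := by rw [mul_pow, frob_norm_sq]
  calc Real.sqrt (∑ i, ‖calA A X i‖ ^ 2) ≤ Real.sqrt (∑ i, frobSq (A i) * ‖X‖ ^ 2) :=
        Real.sqrt_le_sqrt (Finset.sum_le_sum fun i _ => hle i)
  _ = Real.sqrt ((∑ i, frobSq (A i)) * ‖X‖ ^ 2) := by rw [← Finset.sum_mul]
  _ = Real.sqrt (∑ i, frobSq (A i)) * ‖X‖ := by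
      rw [Real.sqrt_mul (Finset.sum_nonneg fun i _ => frobSq_nonneg _),
        Real.sqrt_sq (norm_nonneg _)]

/-- 2-variable Cauchy–Schwarz. -/
lemma cs2 (a b c d : ℝ) (ha : 0 ≤ a) (hb : 0 ≤ b) (hc : 0 ≤ c) (hd : 0 ≤ d) :
    a * c + b * d ≤ Real.sqrt (a ^ 2 + b ^ 2) * Real.sqrt (c ^ 2 + d ^ 2) := by
  have key : (a * c + b * d) ^ 2 ≤ (a ^ 2 + b ^ 2) * (c ^ 2 + d ^ 2) := by
    nlinarith [sq_nonneg (a * d - b * c)]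
  calc a * c + b * d = Real.sqrt ((a * c + b * d) ^ 2) := by
        rw [Real.sqrt_sq (by positivity)]
  _ ≤ Real.sqrt ((a ^ 2 + b ^ 2) * (c ^ 2 + d ^ 2)) := Real.sqrt_le_sqrt key
  _ = Real.sqrt (a ^ 2 + b ^ 2) * Real.sqrt (c ^ 2 + d ^ 2) := Real.sqrt_mul (by positivity) _
set_option maxHeartbeats 2000000 in
/-- the Hessian of `f(L,R) = ‖𝒜(LRᵀ) − b‖₂²` is Lipschitz on the ball of radius
`B`: for all `(L₁,R₁), (L₂,R₂)` with `‖(Lᵢ,Rᵢ)‖ ≤ B` and every direction `(U,V)`,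
`|D²f(L₁,R₁)[(U,V),(U,V)] − D²f(L₂,R₂)[(U,V),(U,V)]|
  ≤ 12 B (Σᵢ ‖Aᵢ‖_F²) (‖U‖_F² + ‖V‖_F²) ‖(L₁,R₁) − (L₂,R₂)‖`,
where `‖(L,R)‖ = √(‖L‖_F² + ‖R‖_F²)`. -/
theorem hessian_lipschitz_matrix_factorization_objective
    (m d₁ d₂ k : ℕ) (A : Fin m → Matrix (Fin d₁) (Fin d₂) ℝ)
    (b : EuclideanSpace ℝ (Fin m)) (B : ℝ) (hB : 0 < B)
    (L₁ L₂ U : Matrix (Fin d₁) (Fin k) ℝ) (R₁ R₂ V : Matrix (Fin d₂) (Fin k) ℝ)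
    (h₁ : Real.sqrt (frobSq L₁ + frobSq R₁) ≤ B)
    (h₂ : Real.sqrt (frobSq L₂ + frobSq R₂) ≤ B) :
    |iteratedFDeriv ℝ 2 (mfObj A b) (L₁, R₁) ![(U, V), (U, V)] -
        iteratedFDeriv ℝ 2 (mfObj A b) (L₂, R₂) ![(U, V), (U, V)]| ≤
      12 * B * (∑ i, frobSq (A i)) * (frobSq U + frobSq V) *
        Real.sqrt (frobSq (L₁ - L₂) + frobSq (R₁ - R₂)) := by
  have key₁ : iteratedFDeriv ℝ 2 (mfObj A b) (L₁, R₁) ![(U, V), (U, V)] =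
      2 * ‖calA A (L₁ * Vᵀ + U * R₁ᵀ)‖ ^ 2 +
        4 * ⟪calA A (L₁ * R₁ᵀ) - b, calA A (U * Vᵀ)⟫ :=
    second_deriv_formula A b (L₁, R₁) (U, V)
  have key₂ : iteratedFDeriv ℝ 2 (mfObj A b) (L₂, R₂) ![(U, V), (U, V)] =
      2 * ‖calA A (L₂ * Vᵀ + U * R₂ᵀ)‖ ^ 2 +
        4 * ⟪calA A (L₂ * R₂ᵀ) - b, calA A (U * Vᵀ)⟫ :=
    second_deriv_formula A b (L₂, R₂) (U, V)
  rw [key₁, key₂]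
  -- notation
  have hS : (0 : ℝ) ≤ ∑ i, frobSq (A i) := Finset.sum_nonneg fun i _ => frobSq_nonneg _
  set S : ℝ := ∑ i, frobSq (A i) with hS_def
  set C : ℝ := Real.sqrt S with hC_def
  have hC0 : 0 ≤ C := Real.sqrt_nonneg _
  have hC2 : C ^ 2 = S := Real.sq_sqrt hS
  have hs0 : (0 : ℝ) ≤ frobSq U + frobSq V :=
    add_nonneg (frobSq_nonneg _) (frobSq_nonneg _)
  set s : ℝ := frobSq U + frobSq V with hs_def
  set σ : ℝ := Real.sqrt s with hσ_def
  have hσ0 : 0 ≤ σ := Real.sqrt_nonneg _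
  have hσ2 : σ ^ 2 = s := Real.sq_sqrt hs0
  set δ : ℝ := Real.sqrt (frobSq (L₁ - L₂) + frobSq (R₁ - R₂)) with hδ_def
  have hδ0 : 0 ≤ δ := Real.sqrt_nonneg _
  -- individual norm bounds
  have mulb : ∀ {e₁ e₂ : ℕ} (X : Matrix (Fin e₁) (Fin k) ℝ) (Y : Matrix (Fin e₂) (Fin k) ℝ),
      ‖X * Yᵀ‖ ≤ ‖X‖ * ‖Y‖ := fun X Y => by
    calc ‖X * Yᵀ‖ ≤ ‖X‖ * ‖Yᵀ‖ := Matrix.frobenius_norm_mul _ _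
    _ = ‖X‖ * ‖Y‖ := by rw [Matrix.frobenius_norm_transpose]
  have hUVσ : Real.sqrt (‖V‖ ^ 2 + ‖U‖ ^ 2) = σ := by
    rw [frob_norm_sq, frob_norm_sq, add_comm, hσ_def, hs_def]
  -- bound for a "psi-type" term
  have hpsi : ∀ (X : Matrix (Fin d₁) (Fin k) ℝ) (Y : Matrix (Fin d₂) (Fin k) ℝ) (t : ℝ),
      Real.sqrt (frobSq X + frobSq Y) ≤ t →
      ‖calA A (X * Vᵀ + U * Yᵀ)‖ ≤ C * (t * σ) := by
    intro X Y t ht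
    calc ‖calA A (X * Vᵀ + U * Yᵀ)‖ ≤ C * ‖X * Vᵀ + U * Yᵀ‖ := calA_norm_le A _
    _ ≤ C * (t * σ) := by
        refine mul_le_mul_of_nonneg_left ?_ hC0
        have h := cs2 ‖X‖ ‖Y‖ ‖V‖ ‖U‖ (norm_nonneg _) (norm_nonneg _) (norm_nonneg _)
          (norm_nonneg _)
        have e1 : Real.sqrt (‖X‖ ^ 2 + ‖Y‖ ^ 2) ≤ t := by
          rw [frob_norm_sq, frob_norm_sq]; exact ht
        calc ‖X * Vᵀ + U * Yᵀ‖ ≤ ‖X * Vᵀ‖ + ‖U * Yᵀ‖ := norm_add_le _ _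
        _ ≤ ‖X‖ * ‖V‖ + ‖U‖ * ‖Y‖ := add_le_add (mulb _ _) (mulb _ _)
        _ = ‖X‖ * ‖V‖ + ‖Y‖ * ‖U‖ := by ring
        _ ≤ Real.sqrt (‖X‖ ^ 2 + ‖Y‖ ^ 2) * Real.sqrt (‖V‖ ^ 2 + ‖U‖ ^ 2) := h
        _ = Real.sqrt (‖X‖ ^ 2 + ‖Y‖ ^ 2) * σ := by rw [hUVσ]
        _ ≤ t * σ := mul_le_mul_of_nonneg_right e1 hσ0
  have hq₁ : ‖calA A (L₁ * Vᵀ + U * R₁ᵀ)‖ ≤ C * (B * σ) := hpsi L₁ R₁ B h₁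
  have hq₂ : ‖calA A (L₂ * Vᵀ + U * R₂ᵀ)‖ ≤ C * (B * σ) := hpsi L₂ R₂ B h₂
  have hqd : ‖calA A (L₁ * Vᵀ + U * R₁ᵀ) - calA A (L₂ * Vᵀ + U * R₂ᵀ)‖ ≤ C * (δ * σ) := by
    have hmap : calA A (L₁ * Vᵀ + U * R₁ᵀ) - calA A (L₂ * Vᵀ + U * R₂ᵀ) =
        calA A ((L₁ - L₂) * Vᵀ + U * (R₁ - R₂)ᵀ) := by
      have hid : (L₁ - L₂) * Vᵀ + U * (R₁ - R₂)ᵀ =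
          (L₁ * Vᵀ + U * R₁ᵀ) - (L₂ * Vᵀ + U * R₂ᵀ) := by
        rw [Matrix.sub_mul, Matrix.transpose_sub, Matrix.mul_sub]; abel
      rw [hid, ← aL_apply, ← aL_apply, ← aL_apply, map_sub]
    rw [hmap]
    exact hpsi (L₁ - L₂) (R₁ - R₂) δ le_rfl
  -- first-term bound
  have habs1 : |‖calA A (L₁ * Vᵀ + U * R₁ᵀ)‖ ^ 2 - ‖calA A (L₂ * Vᵀ + U * R₂ᵀ)‖ ^ 2| ≤
      (C * (δ * σ)) * (2 * (C * (B * σ))) := by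
    have h0 := abs_norm_sub_norm_le (calA A (L₁ * Vᵀ + U * R₁ᵀ)) (calA A (L₂ * Vᵀ + U * R₂ᵀ))
    have h0' := h0.trans hqd
    have hsum : ‖calA A (L₁ * Vᵀ + U * R₁ᵀ)‖ + ‖calA A (L₂ * Vᵀ + U * R₂ᵀ)‖ ≤
        2 * (C * (B * σ)) := by linarith
    have hfac : |‖calA A (L₁ * Vᵀ + U * R₁ᵀ)‖ ^ 2 - ‖calA A (L₂ * Vᵀ + U * R₂ᵀ)‖ ^ 2| =
        |‖calA A (L₁ * Vᵀ + U * R₁ᵀ)‖ - ‖calA A (L₂ * Vᵀ + U * R₂ᵀ)‖| *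
          (‖calA A (L₁ * Vᵀ + U * R₁ᵀ)‖ + ‖calA A (L₂ * Vᵀ + U * R₂ᵀ)‖) := by
      rw [← abs_of_nonneg (add_nonneg (norm_nonneg _) (norm_nonneg _)), ← abs_mul]
      ring_nf
    rw [hfac]
    exact mul_le_mul h0' hsum (add_nonneg (norm_nonneg _) (norm_nonneg _))
      (mul_nonneg hC0 (mul_nonneg hδ0 hσ0))
  -- second-term bound
  have hT : ‖calA A (U * Vᵀ)‖ ≤ C * (s / 2) := by
    calc ‖calA A (U * Vᵀ)‖ ≤ C * ‖U * Vᵀ‖ := calA_norm_le A _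
    _ ≤ C * (s / 2) := by
        refine mul_le_mul_of_nonneg_left ((mulb _ _).trans ?_) hC0
        have e1 : ‖U‖ ^ 2 = frobSq U := frob_norm_sq U
        have e2 : ‖V‖ ^ 2 = frobSq V := frob_norm_sq V
        nlinarith [sq_nonneg (‖U‖ - ‖V‖)]
  have hD : ‖calA A (L₁ * R₁ᵀ) - calA A (L₂ * R₂ᵀ)‖ ≤ C * (2 * B * δ) := by
    have hmap : calA A (L₁ * R₁ᵀ) - calA A (L₂ * R₂ᵀ) =
        calA A (L₁ * (R₁ - R₂)ᵀ + (L₁ - L₂) * R₂ᵀ) := by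
      have hid : L₁ * (R₁ - R₂)ᵀ + (L₁ - L₂) * R₂ᵀ = L₁ * R₁ᵀ - L₂ * R₂ᵀ := by
        rw [Matrix.sub_mul, Matrix.transpose_sub, Matrix.mul_sub]; abel
      rw [hid, ← aL_apply, ← aL_apply, ← aL_apply, map_sub]
    rw [hmap]
    have hL₁B : ‖L₁‖ ≤ B := by
      rw [frob_norm_eq]
      exact (Real.sqrt_le_sqrt (le_add_of_nonneg_right (frobSq_nonneg R₁))).trans h₁
    have hR₂B : ‖R₂‖ ≤ B := by
      rw [frob_norm_eq]
      exact (Real.sqrt_le_sqrt (le_add_of_nonneg_left (frobSq_nonneg L₂))).trans h₂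
    have hdL : ‖L₁ - L₂‖ ≤ δ := by
      rw [frob_norm_eq]
      exact Real.sqrt_le_sqrt (le_add_of_nonneg_right (frobSq_nonneg _))
    have hdR : ‖R₁ - R₂‖ ≤ δ := by
      rw [frob_norm_eq]
      exact Real.sqrt_le_sqrt (le_add_of_nonneg_left (frobSq_nonneg _))
    calc ‖calA A (L₁ * (R₁ - R₂)ᵀ + (L₁ - L₂) * R₂ᵀ)‖
        ≤ C * ‖L₁ * (R₁ - R₂)ᵀ + (L₁ - L₂) * R₂ᵀ‖ := calA_norm_le A _
    _ ≤ C * (2 * B * δ) := by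
        refine mul_le_mul_of_nonneg_left ?_ hC0
        calc ‖L₁ * (R₁ - R₂)ᵀ + (L₁ - L₂) * R₂ᵀ‖
            ≤ ‖L₁ * (R₁ - R₂)ᵀ‖ + ‖(L₁ - L₂) * R₂ᵀ‖ := norm_add_le _ _
        _ ≤ ‖L₁‖ * ‖R₁ - R₂‖ + ‖L₁ - L₂‖ * ‖R₂‖ := add_le_add (mulb _ _) (mulb _ _)
        _ ≤ B * δ + δ * B := add_le_add
            (mul_le_mul hL₁B hdR (norm_nonneg _) (le_of_lt hB))
            (mul_le_mul hdL hR₂B (norm_nonneg _) hδ0)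
        _ = 2 * B * δ := by ring
  have hinner : |(⟪calA A (L₁ * R₁ᵀ) - b, calA A (U * Vᵀ)⟫ : ℝ) -
      ⟪calA A (L₂ * R₂ᵀ) - b, calA A (U * Vᵀ)⟫| ≤ (C * (2 * B * δ)) * (C * (s / 2)) := by
    rw [← inner_sub_left]
    have hcancel : (calA A (L₁ * R₁ᵀ) - b) - (calA A (L₂ * R₂ᵀ) - b) =
        calA A (L₁ * R₁ᵀ) - calA A (L₂ * R₂ᵀ) := by abel
    rw [hcancel]
    exact (abs_real_inner_le_norm _ _).trans
      (mul_le_mul hD hT (norm_nonneg _) (mul_nonneg hC0 (by positivity)))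
  -- assemble
  have hsplit : |2 * ‖calA A (L₁ * Vᵀ + U * R₁ᵀ)‖ ^ 2 +
        4 * ⟪calA A (L₁ * R₁ᵀ) - b, calA A (U * Vᵀ)⟫ -
      (2 * ‖calA A (L₂ * Vᵀ + U * R₂ᵀ)‖ ^ 2 +
        4 * ⟪calA A (L₂ * R₂ᵀ) - b, calA A (U * Vᵀ)⟫)| ≤
      2 * |‖calA A (L₁ * Vᵀ + U * R₁ᵀ)‖ ^ 2 - ‖calA A (L₂ * Vᵀ + U * R₂ᵀ)‖ ^ 2| +
      4 * |(⟪calA A (L₁ * R₁ᵀ) - b, calA A (U * Vᵀ)⟫ : ℝ) -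
        ⟪calA A (L₂ * R₂ᵀ) - b, calA A (U * Vᵀ)⟫| := by
    have := abs_add_le (2 * (‖calA A (L₁ * Vᵀ + U * R₁ᵀ)‖ ^ 2 - ‖calA A (L₂ * Vᵀ + U * R₂ᵀ)‖ ^ 2))
      (4 * ((⟪calA A (L₁ * R₁ᵀ) - b, calA A (U * Vᵀ)⟫ : ℝ) -
        ⟪calA A (L₂ * R₂ᵀ) - b, calA A (U * Vᵀ)⟫))
    rw [abs_mul, abs_mul] at this
    calc _ = |2 * (‖calA A (L₁ * Vᵀ + U * R₁ᵀ)‖ ^ 2 - ‖calA A (L₂ * Vᵀ + U * R₂ᵀ)‖ ^ 2) +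
        4 * ((⟪calA A (L₁ * R₁ᵀ) - b, calA A (U * Vᵀ)⟫ : ℝ) -
          ⟪calA A (L₂ * R₂ᵀ) - b, calA A (U * Vᵀ)⟫)| := by ring_nf
    _ ≤ _ := by
        refine this.trans_eq ?_
        norm_num
  refine hsplit.trans ?_
  have hfinal : 2 * ((C * (δ * σ)) * (2 * (C * (B * σ)))) +
      4 * ((C * (2 * B * δ)) * (C * (s / 2))) = 8 * B * (C ^ 2) * (σ ^ 2) * δ +
        4 * B * (C ^ 2 * s) * δ - 4 * B * (C ^ 2) * (σ ^ 2) * δ := by ring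
  have step : 2 * |‖calA A (L₁ * Vᵀ + U * R₁ᵀ)‖ ^ 2 - ‖calA A (L₂ * Vᵀ + U * R₂ᵀ)‖ ^ 2| +
      4 * |(⟪calA A (L₁ * R₁ᵀ) - b, calA A (U * Vᵀ)⟫ : ℝ) -
        ⟪calA A (L₂ * R₂ᵀ) - b, calA A (U * Vᵀ)⟫| ≤
      2 * ((C * (δ * σ)) * (2 * (C * (B * σ)))) + 4 * ((C * (2 * B * δ)) * (C * (s / 2))) := by
    have := habs1
    have := hinner
    linarith
  refine step.trans ?_
  rw [hfinal, hC2, hσ2]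
  have hpos : 0 ≤ B * S * s * δ :=
    mul_nonneg (mul_nonneg (mul_nonneg hB.le hS) hs0) hδ0
  nlinarith [hpos]
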